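/- If a point p on the terrain is visible from a guard u = (x, y) lying on or above the terrain, then p is also visible from any guard u' = (x, y + δ) with δ > 0. -/
import Mathlib


open Set

/-- Visibility: the segment from terrain point `p` to guard `u` stays on or above
the terrain, which is the graph of `f` over `[a,b]`. -/
def Vis (a b : ℝ) (f : ℝ → ℝ) (p u : ℝ × ℝ) : Prop :=
  ∀ q ∈ segment ℝ p u, q.1 ∈ Set.Icc a b → f q.1 ≤ q.2

/-- If a point on the terrain is visible from a guard `u = (x, y)` lying on or above
the terrain, it is also visible from `u' = (x, y + δ)` for any `δ > 0`. -/
theorem stmt0 (a b : ℝ) (f : ℝ → ℝ) (u : ℝ × ℝ)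
    (hu : u.1 ∈ Set.Icc a b → f u.1 ≤ u.2)
    (t : ℝ) (ht : t ∈ Set.Icc a b)
    (hvis : Vis a b f (t, f t) u) (δ : ℝ) (hδ : 0 < δ) :
    Vis a b f (t, f t) (u.1, u.2 + δ) := by
  rintro q ⟨c, d, hc, hd, hcd, hq⟩ hq1
  have hq' : (c • ((t, f t) : ℝ × ℝ) + d • u) ∈ segment ℝ ((t, f t) : ℝ × ℝ) u :=
    ⟨c, d, hc, hd, hcd, rfl⟩
  have h1 : q.1 = c * t + d * u.1 := by
    simp [← hq, Prod.fst_add, Prod.smul_fst, smul_eq_mul]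
  have hvq := hvis _ hq' (by simpa [h1, smul_eq_mul] using hq1)
  have h2 : q.2 = c * f t + d * (u.2 + δ) := by
    simp [← hq, Prod.snd_add, Prod.smul_snd, smul_eq_mul]
  have h3 : (c • ((t, f t) : ℝ × ℝ) + d • u).2 = c * f t + d * u.2 := by
    simp [smul_eq_mul]
  have h4 : (c • ((t, f t) : ℝ × ℝ) + d • u).1 = c * t + d * u.1 := by
    simp [smul_eq_mul]
  have : f q.1 ≤ c * f t + d * u.2 := by rw [h1, ← h4]; simpa [h3] using hvq
  nlinarith [mul_nonneg hd hδ.le]
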